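/- Let f : ℝ^d → ℝ be locally Lipschitz and assume hypotheses (H1)–(H5) of the setting. Define D₂ := μ/2, E₁ := 8(μ+L)/μ, δ_Grid := min{δ_A/2, 1/(C_M(E₁+1)), μ/(8(C_a+β))}. Then for every x ∈ ball(x̄, δ_Grid), every σ > 0 with E₁·dist(x, M) ≤ σ ≤ δ_Grid, every nonzero g ∈ ∂_σ f(x), and every ĝ ∈ ∂f(x − σ·g/‖g‖): ⟨ĝ, g⟩ ≤ −D₂·‖g‖ + 2D₂·‖Q_x g‖. -/

import Mathlib

open Metric Set Filter
open scoped InnerProductSpace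

abbrev Euc (d : ℕ) := EuclideanSpace ℝ (Fin d)

noncomputable def clarkeSubdiff {d : ℕ} (f : Euc d → ℝ) (x : Euc d) : Set (Euc d) :=
  convexHull ℝ {v | ∃ u : ℕ → Euc d,
    (∀ n, DifferentiableAt ℝ f (u n)) ∧
    Tendsto u atTop (nhds x) ∧
    Tendsto (fun n => gradient f (u n)) atTop (nhds v)}

noncomputable def goldsteinSubdiff {d : ℕ} (f : Euc d → ℝ) (σ : ℝ) (x : Euc d) : Set (Euc d) :=
  convexHull ℝ (⋃ y ∈ closedBall x σ, clarkeSubdiff f y)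

set_option maxHeartbeats 2000000

theorem stmt9 {d : ℕ}
    (f : Euc d → ℝ) (hf : LocallyLipschitz f)
    (xbar : Euc d) (M : Set (Euc d)) (hxbarM : xbar ∈ M)
    (δA L μ γ β Ca CM : ℝ)
    (hδA : 0 < δA) (hL : 0 < L) (hμ : 0 < μ) (hγ : 0 < γ) (hβ : 0 < β)
    (hCa : 0 < Ca) (hCM : 0 < CM)
    (P : Euc d → Euc d)
    (hP : ∀ z ∈ ball xbar (2*δA), P z ∈ M ∧ ‖z - P z‖ = Metric.infDist z M)
    (Tsp : Euc d → Submodule ℝ (Euc d)) (Q : Euc d → Euc d → Euc d)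
    (hQ : ∀ x ∈ ball xbar δA, ∀ v, Q x v = (Submodule.orthogonalProjectionOnto (Tsp x) v : Euc d))
    (G : Euc d → Euc d)
    (hG : ∀ x ∈ ball xbar δA, G x ∈ Tsp x)
    (H1 : ∀ x' ∈ ball xbar (2*δA), ∀ v ∈ clarkeSubdiff f x', ‖v‖ ≤ L)
    (H2 : ∀ x' ∈ ball xbar δA, ∀ v ∈ clarkeSubdiff f x',
      μ * Metric.infDist x' M ≤ ⟪ v, x' - P x' ⟫_ℝ)
    (H3 : ∀ x ∈ ball xbar δA, ∀ x' ∈ ball xbar (2*δA),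
      ‖P x' - P x - Q x (x' - x)‖ ≤ CM * (Metric.infDist x M ^ 2 + ‖x - x'‖ ^ 2))
    (H4 : ∀ x ∈ ball xbar δA, ∀ σ ∈ Icc (0:ℝ) δA, ∀ g ∈ goldsteinSubdiff f σ x,
      ‖Q x (g - G x)‖ ≤ Ca * (Metric.infDist x M + σ))
    (H5 : ∀ x ∈ ball xbar δA, γ/2 * ‖P x - xbar‖ ≤ ‖G x‖ ∧ ‖G x‖ ≤ β * ‖P x - xbar‖)
    (D₂ E₁ δGrid : ℝ)
    (hD₂ : D₂ = μ/2)
    (hE₁ : E₁ = 8*(μ+L)/μ)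
    (hδGrid : δGrid = min (δA/2) (min (1/(CM*(E₁+1))) (μ/(8*(Ca+β)))))
    (x : Euc d) (hx : x ∈ ball xbar δGrid) (σ : ℝ) (hσ0 : 0 < σ)
    (hσ1 : E₁ * Metric.infDist x M ≤ σ) (hσ2 : σ ≤ δGrid)
    (g : Euc d) (hg : g ∈ goldsteinSubdiff f σ x) (hgne : g ≠ 0)
    (ghat : Euc d) (hghat : ghat ∈ clarkeSubdiff f (x - (σ/‖g‖) • g)) :
    ⟪ ghat, g ⟫_ℝ ≤ -(D₂ * ‖g‖) + 2*D₂*‖Q x g‖ := by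
  have hxball : dist x xbar < δGrid := mem_ball.mp hx
  have hδGpos : 0 < δGrid := lt_of_le_of_lt dist_nonneg hxball
  have hδG1 : δGrid ≤ δA/2 := hδGrid ▸ min_le_left _ _
  have hδG2 : δGrid ≤ 1/(CM*(E₁+1)) := by
    rw [hδGrid]; exact le_trans (min_le_right _ _) (min_le_left _ _)
  have hδG3 : δGrid ≤ μ/(8*(Ca+β)) := by
    rw [hδGrid]; exact le_trans (min_le_right _ _) (min_le_right _ _)
  have hE1ge8 : 8 ≤ E₁ := by rw [hE₁, le_div_iff₀ hμ]; linarith only [hL]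
  have hμE₁ : μ * E₁ = 8*(μ+L) := by rw [hE₁]; field_simp
  have ha : (0:ℝ) < ‖g‖ := norm_pos_iff.mpr hgne
  set a : ℝ := ‖g‖ with hadef
  set D : ℝ := Metric.infDist x M with hDdef
  set b : ℝ := ‖Q x g‖ with hbdef
  have hD0 : 0 ≤ D := Metric.infDist_nonneg
  have hs2 : 8 * D ≤ σ :=
    le_trans (mul_le_mul_of_nonneg_right hE1ge8 hD0) hσ1
  set x' : Euc d := x - (σ/a) • g with hx'def
  have hxx' : x - x' = (σ/a) • g := by rw [hx'def]; abel
  have hx'x_norm : ‖x - x'‖ = σ := by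
    rw [hxx', norm_smul, Real.norm_eq_abs, abs_of_nonneg (by positivity),
      div_mul_cancel₀ _ (ne_of_gt ha)]
  -- memberships
  have hxA : x ∈ ball xbar δA := mem_ball.mpr (by linarith only [hxball, hδG1, hδA])
  have hx2A : x ∈ ball xbar (2*δA) := mem_ball.mpr (by linarith only [hxball, hδG1, hδA])
  have hdistx'x : dist x' x = σ := by
    rw [dist_eq_norm, ← norm_sub_rev, hx'x_norm]
  have hx'A : x' ∈ ball xbar δA := by
    refine mem_ball.mpr (lt_of_le_of_lt (dist_triangle x' x xbar) ?_)
    rw [hdistx'x]; linarith only [hσ2, hxball, hδG1, hδA]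
  have hx'2A : x' ∈ ball xbar (2*δA) := by
    refine mem_ball.mpr (lt_of_le_of_lt (dist_triangle x' x xbar) ?_)
    rw [hdistx'x]; linarith only [hσ2, hxball, hδG1, hδA]
  have hσδA : σ ≤ δA := by linarith only [hσ2, hδG1, hδA]
  -- projection facts
  obtain ⟨hPxM, hPxd⟩ := hP x hx2A
  obtain ⟨hPx'M, hPx'd⟩ := hP x' hx'2A
  -- Q basic facts
  have hQnorm : ∀ v : Euc d, ‖Q x v‖ ≤ ‖v‖ := by
    intro v
    rw [hQ x hxA v]
    have h1 : ‖Submodule.orthogonalProjectionOnto (Tsp x) v‖ ≤ ‖Submodule.orthogonalProjectionOnto (Tsp x)‖ * ‖v‖ :=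
      (Submodule.orthogonalProjectionOnto (Tsp x)).le_opNorm v
    have h2 := Submodule.orthogonalProjectionOnto_norm_le (Tsp x)
    have h3 : ‖((Submodule.orthogonalProjectionOnto (Tsp x) v : Tsp x) : Euc d)‖
        = ‖Submodule.orthogonalProjectionOnto (Tsp x) v‖ := rfl
    rw [h3]
    have h4 := mul_le_mul_of_nonneg_right h2 (norm_nonneg v)
    linarith only [h1, h4]
  have hb_le_a : b ≤ a := hQnorm g
  have hb0 : 0 ≤ b := norm_nonneg _
  have hQsmul : ∀ (c : ℝ) (v : Euc d), Q x (c • v) = c • Q x v := by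
    intro c v
    rw [hQ x hxA, hQ x hxA, map_smul]
    rfl
  have hQsub : ∀ v w : Euc d, Q x (v - w) = Q x v - Q x w := by
    intro v w
    rw [hQ x hxA, hQ x hxA, hQ x hxA, map_sub]
    rfl
  have hx'mx : x' - x = -((σ/a) • g) := by rw [hx'def]; abel
  have hQx'mx : Q x (x' - x) = -((σ/a) • Q x g) := by
    rw [hx'mx, show -((σ/a) • g) = (-(σ/a)) • g by rw [neg_smul], hQsmul, neg_smul]
  have hQx'mx_norm : ‖Q x (x' - x)‖ = (σ/a) * b := by
    rw [hQx'mx, norm_neg, norm_smul, Real.norm_eq_abs, abs_of_nonneg (by positivity)]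
  -- H3
  have hH3 : ‖P x' - P x - Q x (x' - x)‖ ≤ CM * (D^2 + σ^2) := by
    have h := H3 x hxA x' hx'2A
    rwa [hx'x_norm] at h
  have hPP : ‖P x - P x'‖ ≤ (σ/a) * b + CM * (D^2 + σ^2) := by
    have key : P x - P x' = -(P x' - P x - Q x (x' - x)) - Q x (x' - x) := by abel
    calc ‖P x - P x'‖ = ‖-(P x' - P x - Q x (x' - x)) - Q x (x' - x)‖ := by rw [← key]
      _ ≤ ‖-(P x' - P x - Q x (x' - x))‖ + ‖Q x (x' - x)‖ := norm_sub_le _ _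
      _ = ‖P x' - P x - Q x (x' - x)‖ + ‖Q x (x' - x)‖ := by rw [norm_neg]
      _ ≤ CM * (D^2 + σ^2) + (σ/a) * b := by rw [hQx'mx_norm]; linarith only [hH3]
      _ = (σ/a) * b + CM * (D^2 + σ^2) := by ring
  have hlow : σ - D - ((σ/a) * b + CM * (D^2 + σ^2)) ≤ ‖x' - P x'‖ := by
    have tri : ‖x - x'‖ ≤ ‖x - P x‖ + ‖P x - P x'‖ + ‖P x' - x'‖ := by
      calc ‖x - x'‖ = ‖(x - P x) + (P x - P x') + (P x' - x')‖ := by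
            congr 1; abel
        _ ≤ ‖x - P x‖ + ‖P x - P x'‖ + ‖P x' - x'‖ := norm_add₃_le
    have h1 : ‖P x' - x'‖ = ‖x' - P x'‖ := norm_sub_rev _ _
    rw [hx'x_norm, hPxd, h1] at tri
    linarith only [tri, hPP]
  -- ghat facts
  have hx'cb : x' ∈ closedBall x σ := mem_closedBall.mpr (le_of_eq hdistx'x)
  have hghatG : ghat ∈ goldsteinSubdiff f σ x :=
    subset_convexHull ℝ _ (Set.mem_biUnion hx'cb hghat)
  have hgh_L : ‖ghat‖ ≤ L := H1 x' hx'2A ghat hghat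
  have hH2 : μ * ‖x' - P x'‖ ≤ ⟪ghat, x' - P x'⟫_ℝ := by
    have h := H2 x' hx'A ghat hghat
    rwa [← hPx'd] at h
  -- bound on ‖Q x ghat‖
  have hH4g := H4 x hxA σ ⟨hσ0.le, hσδA⟩ ghat hghatG
  have hGmem := hG x hxA
  have hGfix : Q x (G x) = G x := by
    rw [hQ x hxA]; exact Submodule.starProjection_eq_self_iff.mpr hGmem
  have hPxx : ‖P x - xbar‖ ≤ D + δGrid := by
    calc ‖P x - xbar‖ = ‖(P x - x) + (x - xbar)‖ := by congr 1; abel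
      _ ≤ ‖P x - x‖ + ‖x - xbar‖ := norm_add_le _ _
      _ ≤ D + δGrid := by
          rw [norm_sub_rev, hPxd]
          have h7 : ‖x - xbar‖ ≤ δGrid := by
            rw [dist_eq_norm] at hxball; exact hxball.le
          linarith only [h7]
  have hKb : ‖Q x ghat‖ ≤ Ca*(D+σ) + β*(D+δGrid) := by
    have hsplit : Q x ghat = Q x (ghat - G x) + G x := by
      rw [hQsub, hGfix]; abel
    have h5 := (H5 x hxA).2
    calc ‖Q x ghat‖ = ‖Q x (ghat - G x) + G x‖ := by rw [hsplit]
      _ ≤ ‖Q x (ghat - G x)‖ + ‖G x‖ := norm_add_le _ _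
      _ ≤ Ca*(D+σ) + β*(D+δGrid) := by
          have h6 : ‖G x‖ ≤ β * (D + δGrid) :=
            le_trans h5 (mul_le_mul_of_nonneg_left hPxx hβ.le)
          linarith only [hH4g, h6]
  -- self-adjointness bound
  have hinner_self : ⟪ghat, Q x g⟫_ℝ ≤ ‖Q x ghat‖ * b := by
    have e1 : ⟪ghat, Q x g⟫_ℝ = ⟪Q x ghat, Q x g⟫_ℝ := by
      calc ⟪ghat, Q x g⟫_ℝ = ⟪ghat, ((Submodule.orthogonalProjectionOnto (Tsp x) g : Tsp x) : Euc d)⟫_ℝ := by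
            rw [hQ x hxA g]
        _ = ⟪(Submodule.orthogonalProjectionOnto (Tsp x) ghat : Tsp x), (Submodule.orthogonalProjectionOnto (Tsp x) g : Tsp x)⟫_ℝ :=
            (Submodule.inner_orthogonalProjectionOnto_eq_of_mem_right (K := Tsp x) _ _).symm
        _ = ⟪((Submodule.orthogonalProjectionOnto (Tsp x) ghat : Tsp x) : Euc d),
              ((Submodule.orthogonalProjectionOnto (Tsp x) g : Tsp x) : Euc d)⟫_ℝ :=
            Submodule.coe_inner _ _ _
        _ = ⟪Q x ghat, Q x g⟫_ℝ := by rw [hQ x hxA ghat, hQ x hxA g]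
    rw [e1]
    exact real_inner_le_norm _ _
  -- inner product decomposition
  have hT1 : ⟪ghat, x - P x⟫_ℝ ≤ L * D := by
    calc ⟪ghat, x - P x⟫_ℝ ≤ ‖ghat‖ * ‖x - P x‖ := real_inner_le_norm _ _
      _ ≤ L * D := by rw [hPxd]; exact mul_le_mul_of_nonneg_right hgh_L hD0
  have hT2 : ⟪ghat, P x - P x'⟫_ℝ
      ≤ L * (CM*(D^2+σ^2)) + (σ/a) * (‖Q x ghat‖ * b) := by
    have hrepr : P x - P x' = -(P x' - P x - Q x (x' - x)) + (σ/a) • Q x g := by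
      rw [hQx'mx]; abel
    rw [hrepr, inner_add_right, real_inner_smul_right]
    have b1 : ⟪ghat, -(P x' - P x - Q x (x' - x))⟫_ℝ ≤ L * (CM*(D^2+σ^2)) := by
      calc ⟪ghat, -(P x' - P x - Q x (x' - x))⟫_ℝ
          ≤ ‖ghat‖ * ‖-(P x' - P x - Q x (x' - x))‖ := real_inner_le_norm _ _
        _ = ‖ghat‖ * ‖P x' - P x - Q x (x' - x)‖ := by rw [norm_neg]
        _ ≤ L * (CM*(D^2+σ^2)) :=
            mul_le_mul hgh_L hH3 (norm_nonneg _) hL.le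
    have b2 : (σ/a) * ⟪ghat, Q x g⟫_ℝ ≤ (σ/a) * (‖Q x ghat‖ * b) :=
      mul_le_mul_of_nonneg_left hinner_self (by positivity)
    linarith only [b1, b2]
  have hT3 : ⟪ghat, P x' - x'⟫_ℝ
      ≤ -(μ * (σ - D - ((σ/a) * b + CM*(D^2+σ^2)))) := by
    have e : ⟪ghat, P x' - x'⟫_ℝ = -⟪ghat, x' - P x'⟫_ℝ := by
      rw [show P x' - x' = -(x' - P x') from by abel, inner_neg_right]
    rw [e]
    have h1 : μ * (σ - D - ((σ/a) * b + CM*(D^2+σ^2))) ≤ μ * ‖x' - P x'‖ :=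
      mul_le_mul_of_nonneg_left hlow hμ.le
    linarith only [h1, hH2]
  have hdecomp : ⟪ghat, x - x'⟫_ℝ
      = ⟪ghat, x - P x⟫_ℝ + ⟪ghat, P x - P x'⟫_ℝ + ⟪ghat, P x' - x'⟫_ℝ := by
    rw [← inner_add_right, ← inner_add_right]
    congr 1
    abel
  have hmain : ⟪ghat, x - x'⟫_ℝ
      ≤ L*D + L*(CM*(D^2+σ^2)) + (σ/a)*(‖Q x ghat‖*b) - μ*σ + μ*D
        + μ*((σ/a)*b) + μ*(CM*(D^2+σ^2)) := by
    rw [hdecomp]; linarith only [hT1, hT2, hT3]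
  -- scalar bounds
  have hs1 : (L+μ)*D ≤ μ*σ/8 := by
    have h := mul_le_mul_of_nonneg_left hσ1 hμ.le
    have h2 : μ*(E₁*D) = 8*((μ+L)*D) := by linear_combination D * hμE₁
    linarith only [h, h2]
  have hg2 : CM*σ*(E₁+1) ≤ 1 := by
    have hpos : (0:ℝ) < CM*(E₁+1) := mul_pos hCM (by linarith only [hE1ge8])
    have hσδ : σ ≤ 1/(CM*(E₁+1)) := le_trans hσ2 hδG2
    calc CM*σ*(E₁+1) = σ * (CM*(E₁+1)) := by ring
      _ ≤ (1/(CM*(E₁+1))) * (CM*(E₁+1)) := mul_le_mul_of_nonneg_right hσδ hpos.le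
      _ = 1 := by field_simp
  have hCMS : (L+μ)*(CM*(D^2+σ^2)) ≤ (65/512)*(μ*σ) := by
    have hD2 : D^2 ≤ σ^2/64 := by
      have h := mul_self_le_mul_self (by linarith only [hD0] : (0:ℝ) ≤ 8*D) hs2
      linarith only [h]
    have t1 : (μ*σ)*(CM*σ*(E₁+1)) ≤ (μ*σ)*1 :=
      mul_le_mul_of_nonneg_left hg2 (by positivity)
    have t3 : μ*(E₁+1) = 8*(μ+L) + μ := by linear_combination hμE₁
    have t4 : 8*((L+μ)*(CM*σ^2)) ≤ μ*(E₁+1)*(CM*σ^2) := by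
      have := mul_le_mul_of_nonneg_right (show 8*(L+μ) ≤ μ*(E₁+1) by linarith only [t3, hμ])
        (show (0:ℝ) ≤ CM*σ^2 by positivity)
      linarith only [this]
    have t5 : (μ*σ)*(CM*σ*(E₁+1)) = μ*(E₁+1)*(CM*σ^2) := by ring
    have t6 : (L+μ)*(CM*σ^2) ≤ μ*σ/8 := by linarith only [t1, t4, t5]
    have t7 : CM*(D^2+σ^2) ≤ (65/64)*(CM*σ^2) := by
      have h := mul_le_mul_of_nonneg_left hD2 hCM.le
      linarith only [h]
    have t8 := mul_le_mul_of_nonneg_left t7 (show (0:ℝ) ≤ L+μ by linarith only [hL, hμ])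
    have t9 := mul_le_mul_of_nonneg_left t6 (show (0:ℝ) ≤ (65/64:ℝ) by norm_num)
    linarith only [t8, t9]
  have hKnum : ‖Q x ghat‖ ≤ (9/64)*μ := by
    have hcb : (0:ℝ) < Ca + β := by linarith only [hCa, hβ]
    have hδ3' : δGrid * (8*(Ca+β)) ≤ μ := by
      rw [le_div_iff₀ (by positivity)] at hδG3; linarith only [hδG3]
    have h1 : D + σ ≤ (9/8)*δGrid := by linarith only [hs2, hσ2]
    have h2 : D + δGrid ≤ (9/8)*δGrid := by linarith only [hs2, hσ2]
    have h3 : Ca*(D+σ) ≤ Ca*((9/8)*δGrid) := mul_le_mul_of_nonneg_left h1 hCa.le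
    have h4 : β*(D+δGrid) ≤ β*((9/8)*δGrid) := mul_le_mul_of_nonneg_left h2 hβ.le
    linarith only [hKb, h3, h4, hδ3']
  -- final assembly
  have has : a * (σ/a) = σ := by field_simp
  have hinner_gg : σ * ⟪ghat, g⟫_ℝ = a * ⟪ghat, x - x'⟫_ℝ := by
    rw [hxx', real_inner_smul_right]
    field_simp
  have hK0 : 0 ≤ ‖Q x ghat‖ := norm_nonneg _
  have t1 : (L+μ)*D*a ≤ (μ*σ/8)*a := mul_le_mul_of_nonneg_right hs1 ha.le
  have t2 : ((L+μ)*(CM*(D^2+σ^2)))*a ≤ ((65/512)*(μ*σ))*a :=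
    mul_le_mul_of_nonneg_right hCMS ha.le
  have t3 : ‖Q x ghat‖*b*σ ≤ ((9/64)*μ)*a*σ := by
    have h : ‖Q x ghat‖*b ≤ ((9/64)*μ)*a :=
      mul_le_mul hKnum hb_le_a hb0 (by positivity)
    exact mul_le_mul_of_nonneg_right h hσ0.le
  have hμσa : (0:ℝ) ≤ μ*σ*a := by positivity
  have hfinal : σ * ⟪ghat, g⟫_ℝ ≤ σ * (-(D₂*a) + 2*D₂*b) := by
    rw [hinner_gg, hD₂]
    have step1 : a * ⟪ghat, x - x'⟫_ℝ
        ≤ a * (L*D + L*(CM*(D^2+σ^2)) + (σ/a)*(‖Q x ghat‖*b) - μ*σ + μ*D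
          + μ*((σ/a)*b) + μ*(CM*(D^2+σ^2))) := mul_le_mul_of_nonneg_left hmain ha.le
    have heq : a * (L*D + L*(CM*(D^2+σ^2)) + (σ/a)*(‖Q x ghat‖*b) - μ*σ + μ*D
          + μ*((σ/a)*b) + μ*(CM*(D^2+σ^2)))
        = L*D*a + L*(CM*(D^2+σ^2))*a + ‖Q x ghat‖*b*σ - μ*σ*a + μ*D*a
          + μ*(σ*b) + μ*(CM*(D^2+σ^2))*a := by
      field_simp
    rw [heq] at step1
    linarith only [step1, t1, t2, t3, hμσa]
  exact (mul_le_mul_iff_right₀ hσ0).mp hfinal
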